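/- Let G be a finite directed acyclic graph with a unique sink z and let F be any field. If the pebbling contradiction of G has a Nullstellensatz refutation over F of size at most t + 1 and degree at most s, then G has a reversible pebbling with time at most t and space at most s. -/

import Mathlib

open MvPolynomial

/-- A finite directed graph. -/
structure FinDigraph where
  V : Type
  [instFintype : Fintype V]
  Edge : V → V → Prop

attribute [instance] FinDigraph.instFintype

namespace FinDigraph

/-- The set of (immediate) predecessors of a vertex. -/
def pred (G : FinDigraph) (v : G.V) : Set G.V := {u | G.Edge u v}

/-- A directed graph is acyclic if no vertex reaches itself by a nonempty path. -/
def Acyclic (G : FinDigraph) : Prop := ∀ v, ¬ Relation.TransGen G.Edge v v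

/-- A sink is a vertex with no outgoing edge. -/
def IsSink (G : FinDigraph) (z : G.V) : Prop := ∀ u, ¬ G.Edge z u

/-- `z` is the unique sink of `G`. -/
def UniqueSink (G : FinDigraph) (z : G.V) : Prop :=
  G.IsSink z ∧ ∀ v, G.IsSink v → v = z

/-- One legal move of the reversible pebble game: place a pebble on a vertex all of whose
predecessors are pebbled, or remove a pebble from such a vertex. -/
def RevMove (G : FinDigraph) (P Q : Set G.V) : Prop :=
  ∃ v, G.pred v ⊆ P ∧
    ((v ∉ P ∧ Q = insert v P) ∨ (v ∈ P ∧ Q = P \ {v}))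

/-- One legal move of the standard pebble game: place a pebble on a vertex all of whose
predecessors are pebbled, or remove a pebble from an arbitrary vertex. -/
def StdMove (G : FinDigraph) (P Q : Set G.V) : Prop :=
  (∃ v, G.pred v ⊆ P ∧ v ∉ P ∧ Q = insert v P) ∨ (∃ v, v ∈ P ∧ Q = P \ {v})

/-- A reversible pebbling of `G` (with sink `z`) with time `t`. -/
def IsRevPebbling (G : FinDigraph) (z : G.V) (t : ℕ) (P : ℕ → Set G.V) : Prop :=
  P 0 = ∅ ∧ P t = ∅ ∧ (∃ i ≤ t, z ∈ P i) ∧ ∀ i < t, G.RevMove (P i) (P (i + 1))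

/-- A standard pebbling of `G` (with sink `z`) with time `t`. -/
def IsStdPebbling (G : FinDigraph) (z : G.V) (t : ℕ) (P : ℕ → Set G.V) : Prop :=
  P 0 = ∅ ∧ P t = ∅ ∧ (∃ i ≤ t, z ∈ P i) ∧ ∀ i < t, G.StdMove (P i) (P (i + 1))

/-- The space of a pebbling: the maximal number of pebbles in any configuration. -/
noncomputable def space (G : FinDigraph) (t : ℕ) (P : ℕ → Set G.V) : ℕ :=
  (Finset.range (t + 1)).sup fun i => (P i).ncard

end FinDigraph

/-- A Nullstellensatz certificate (refutation): `∑ i, r i * p i + ∑ j, s j * (X j ^ 2 - X j) = 1`. -/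
def IsNSCert {F σ ι : Type} [Field F] [Fintype σ] [Fintype ι]
    (p r : ι → MvPolynomial σ F) (s : σ → MvPolynomial σ F) : Prop :=
  ∑ i, r i * p i + ∑ j, s j * (X j ^ 2 - X j) = 1

/-- The size of a Nullstellensatz refutation:
`∑ i, m(r i) * m(p i) + ∑ j, 2 * m(s j)` where `m` counts monomials. -/
noncomputable def nsSize {F σ ι : Type} [Field F] [Fintype σ] [Fintype ι]
    (p r : ι → MvPolynomial σ F) (s : σ → MvPolynomial σ F) : ℕ :=
  ∑ i, (r i).support.card * (p i).support.card + ∑ j, 2 * (s j).support.card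

/-- The degree of a Nullstellensatz refutation: the maximum of the degrees of the
polynomials `r i * p i` and `s j * (X j ^ 2 - X j)`. -/
noncomputable def nsDegree {F σ ι : Type} [Field F] [Fintype σ] [Fintype ι]
    (p r : ι → MvPolynomial σ F) (s : σ → MvPolynomial σ F) : ℕ :=
  max (Finset.univ.sup fun i => (r i * p i).totalDegree)
    (Finset.univ.sup fun j => (s j * (X j ^ 2 - X j)).totalDegree)

/-- A polynomial is multilinear if every variable occurs with degree at most 1
in each of its monomials. -/
def Multilinear {F σ : Type} [Field F] (p : MvPolynomial σ F) : Prop :=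
  ∀ m ∈ p.support, ∀ j, m j ≤ 1

namespace FinDigraph

/-- The axiom `A_v = (1 - x_v) * ∏_{u ∈ pred(v)} x_u` of the pebbling contradiction. -/
noncomputable def pebAxiom (F : Type) [Field F] (G : FinDigraph) (v : G.V) :
    MvPolynomial G.V F :=
  (1 - X v) * ∏ u ∈ (G.pred v).toFinite.toFinset, X u

/-- The pebbling contradiction of `G` with sink `z`: the axioms `A_v` for every vertex `v`,
together with the sink axiom `A_sink = x_z`. -/
noncomputable def pebContradiction (F : Type) [Field F] (G : FinDigraph) (z : G.V) :
    Option G.V → MvPolynomial G.V F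
  | none => X z
  | some v => G.pebAxiom F v

end FinDigraph


namespace PebAux

open List

variable {α : Type*}

/-- Upgrade a chain along a relation implication that may use membership. -/
lemma chain_imp_mem {R S : α → α → Prop} :
    ∀ {l : List α} {a : α}, List.Chain R a l →
      (∀ x y, x ∈ a :: l → y ∈ a :: l → R x y → S x y) → List.Chain S a l := by
  intro l
  induction l with
  | nil => intro a _ _; exact List.Chain.nil
  | cons b l ih =>
    intro a h himp
    rcases List.chain_cons.1 h with ⟨hab, hbl⟩
    exact List.Chain.cons (himp a b (by simp) (by simp) hab)
      (ih hbl fun x y hx hy hr => himp x y (List.mem_cons_of_mem _ hx)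
        (List.mem_cons_of_mem _ hy) hr)

/-- From a chain and a member, extract the chain starting at that member (a suffix). -/
lemma chain_suffix_of_mem {R : α → α → Prop} {x y : α} {l : List α}
    (h : List.Chain R x l) (hy : y ∈ x :: l) :
    ∃ t, List.Chain R y t ∧ (y :: t) <:+ (x :: l) := by
  rcases List.mem_cons.1 hy with rfl | hy
  · exact ⟨l, h, suffix_refl _⟩
  · rcases List.append_of_mem hy with ⟨s, t, rfl⟩
    refine ⟨t, (List.isChain_cons_split.1 h).2, ?_⟩
    exact ⟨x :: s, by simp⟩

/-- Every element of the tail of a chain has a predecessor. -/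
lemma chain_exists_pred {R : α → α → Prop} :
    ∀ {l : List α} {a : α}, List.Chain R a l → ∀ x ∈ l, ∃ y, R y x := by
  intro l
  induction l with
  | nil => intro a _ x hx; simp at hx
  | cons b l ih =>
    intro a h x hx
    rcases List.chain_cons.1 h with ⟨hab, hbl⟩
    rcases List.mem_cons.1 hx with rfl | hx
    · exact ⟨a, hab⟩
    · exact ih hbl x hx

/-- A reflexive-transitive chain can be realized by a duplicate-free chain. -/
lemma rtg_nodup_chain {R : α → α → Prop} {a b : α} (h : Relation.ReflTransGen R a b) :
    ∃ l, List.Chain R a l ∧ (a :: l).getLast? = some b ∧ (a :: l).Nodup := by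
  induction h using Relation.ReflTransGen.head_induction_on with
  | refl => exact ⟨[], List.Chain.nil, rfl, List.nodup_singleton b⟩
  | head hr _ ih =>
    rename_i a c _
    obtain ⟨l, hchain, hlast, hnodup⟩ := ih
    by_cases hmem : a ∈ c :: l
    · obtain ⟨t, ht, hsuf⟩ := chain_suffix_of_mem hchain hmem
      refine ⟨t, ht, ?_, hnodup.sublist hsuf.sublist⟩
      rw [← hlast]
      obtain ⟨u, hu⟩ := hsuf
      rw [← hu, List.getLast?_append_of_ne_nil _ (by simp)]
    · exact ⟨c :: l, List.Chain.cons hr hchain,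
        by rw [List.getLast?_cons_cons]; exact hlast, List.nodup_cons.2 ⟨hmem, hnodup⟩⟩


/-- Remove consecutive duplicates (relative to a running head). -/
def compress [DecidableEq α] : α → List α → List α
  | _, [] => []
  | a, b :: l => if b = a then compress a l else b :: compress b l

lemma compress_nil [DecidableEq α] (a : α) : compress a [] = [] := rfl

lemma compress_chain [DecidableEq α] {M : α → α → Prop} :
    ∀ {l : List α} {a : α}, List.Chain (fun x y => x = y ∨ M x y) a l →
      List.Chain M a (compress a l) := by
  intro l
  induction l with
  | nil => intro a _; exact List.Chain.nil
  | cons b l ih =>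
    intro a h
    rcases List.chain_cons.1 h with ⟨hab, hbl⟩
    by_cases hba : b = a
    · rw [compress, if_pos hba]
      subst hba
      exact ih hbl
    · rw [compress, if_neg hba]
      rcases hab with rfl | hm
      · exact absurd rfl hba
      · exact List.Chain.cons hm (ih hbl)

lemma compress_subset [DecidableEq α] :
    ∀ (l : List α) (a : α), ∀ x ∈ compress a l, x ∈ l := by
  intro l
  induction l with
  | nil => intro a x hx; simp [compress] at hx
  | cons b l ih =>
    intro a x hx
    rw [compress] at hx
    by_cases hba : b = a
    · rw [if_pos hba] at hx
      exact List.mem_cons_of_mem _ (ih a x hx)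
    · rw [if_neg hba] at hx
      rcases List.mem_cons.1 hx with rfl | hx
      · exact List.mem_cons_self
      · exact List.mem_cons_of_mem _ (ih b x hx)

lemma compress_getLast? [DecidableEq α] :
    ∀ (l : List α) (a : α), (a :: compress a l).getLast? = (a :: l).getLast? := by
  intro l
  induction l with
  | nil => intro a; rfl
  | cons b l ih =>
    intro a
    rw [compress]
    by_cases hba : b = a
    · rw [if_pos hba, ih a, List.getLast?_cons_cons]
      subst hba; rfl
    · rw [if_neg hba, List.getLast?_cons_cons, ih b, List.getLast?_cons_cons]

/-- The counting lemma: in a duplicate-free chain whose steps are either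
"same image under `f`" or witnessed by an edge from `E`, the number of image-changing
steps is at most `|E|`. -/
lemma count_lemma {β ε : Type*} [DecidableEq β] [DecidableEq ε] (f : α → β)
    (ept : ε → α × α) :
    ∀ (l : List α) (a : α) (E : Finset ε),
      List.Chain (fun x y => f x = f y ∨ ∃ e ∈ E, ept e = (x, y) ∨ ept e = (y, x)) a l →
      (a :: l).Nodup →
      (compress (f a) (l.map f)).length ≤ E.card := by
  intro l
  induction l with
  | nil => intro a E _ _; simp [compress]
  | cons b l ih =>
    intro a E h hnd
    rcases List.chain_cons.1 h with ⟨hab, hbl⟩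
    have hnd' : (b :: l).Nodup := hnd.of_cons
    have hanotin : a ∉ b :: l := (List.nodup_cons.1 hnd).1
    by_cases hfb : f b = f a
    · rw [List.map_cons, compress, if_pos hfb]
      rw [← hfb]
      exact ih b E hbl hnd'
    · rw [List.map_cons, compress, if_neg hfb]
      rcases hab with heq | ⟨e, heE, hept⟩
      · exact absurd heq.symm hfb
      · have hsub : List.Chain
            (fun x y => f x = f y ∨ ∃ e' ∈ E.erase e, ept e' = (x, y) ∨ ept e' = (y, x)) b l := by
          refine chain_imp_mem hbl ?_
          rintro x y hx hy (heq | ⟨e', he'E, hept'⟩)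
          · exact Or.inl heq
          · refine Or.inr ⟨e', Finset.mem_erase.2 ⟨?_, he'E⟩, hept'⟩
            rintro rfl
            have haxy : a = x ∨ a = y := by
              rcases hept' with h1 | h1 <;> rcases hept with h2 | h2 <;>
                (rw [h1] at h2; injection h2 with h3 h4)
              · exact Or.inl h3.symm
              · exact Or.inr h4.symm
              · exact Or.inr h3.symm
              · exact Or.inl h4.symm
            rcases haxy with rfl | rfl
            · exact hanotin hx
            · exact hanotin hy
        have := ih b (E.erase e) hsub hnd'
        have hcard : (E.erase e).card + 1 = E.card := by
          rw [Finset.card_erase_of_mem heE]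
          exact Nat.succ_pred_eq_of_pos (Finset.card_pos.2 ⟨e, heE⟩)
        simp only [List.length_cons]
        omega

end PebAux

namespace PebAux2

open List

variable {α : Type*}

lemma chain_getD {R : α → α → Prop} :
    ∀ {l : List α} {a : α} (d : α), List.Chain R a l →
      ∀ i < l.length, R ((a :: l).getD i d) ((a :: l).getD (i + 1) d) := by
  intro l
  induction l with
  | nil => intro a d _ i hi; simp at hi
  | cons b l ih =>
    intro a d h i hi
    rcases List.chain_cons.1 h with ⟨hab, hbl⟩
    cases i with
    | zero => simpa using hab
    | succ i =>
      have := ih d hbl i (by simpa using hi)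
      simpa using this

lemma getD_mem {l : List α} {i : ℕ} (d : α) (h : i < l.length) : l.getD i d ∈ l := by
  rw [List.getD_eq_getElem l d h]
  exact List.getElem_mem h

lemma getD_last : ∀ {l : List α} {b : α} (d : α), l.getLast? = some b →
    l.getD (l.length - 1) d = b := by
  intro l
  induction l with
  | nil => intro b d h; simp at h
  | cons a l ih =>
    intro b d h
    cases l with
    | nil => simp at h ⊢; exact h
    | cons c l =>
      rw [List.getLast?_cons_cons] at h
      have := ih d h
      simpa using this

lemma getLast?_map {β : Type*} (f : α → β) :
    ∀ (l : List α), (l.map f).getLast? = l.getLast?.map f := by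
  intro l
  induction l with
  | nil => rfl
  | cons a l ih =>
    cases l with
    | nil => rfl
    | cons c l =>
      rw [List.map_cons, List.map_cons, List.getLast?_cons_cons, ← List.map_cons,
        ih, List.getLast?_cons_cons]

end PebAux2

namespace PebAux3

open MvPolynomial Finsupp

variable {σ : Type} {R : Type} [CommRing R]

/-- Degree of a monomial. -/
noncomputable def monDeg (μ : σ →₀ ℕ) : ℕ := μ.sum fun _ e => e

lemma card_support_le_monDeg (μ : σ →₀ ℕ) : μ.support.card ≤ monDeg μ := by
  rw [monDeg, Finsupp.sum, Finset.card_eq_sum_ones]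
  exact Finset.sum_le_sum fun i hi =>
    Nat.one_le_iff_ne_zero.2 (Finsupp.mem_support_iff.1 hi)

lemma monDeg_le_totalDegree {p : MvPolynomial σ R} {μ : σ →₀ ℕ} (h : μ ∈ p.support) :
    monDeg μ ≤ p.totalDegree := MvPolynomial.le_totalDegree h

lemma monDeg_add (μ ν : σ →₀ ℕ) : monDeg (μ + ν) = monDeg μ + monDeg ν :=
  Finsupp.sum_add_index' (fun _ => rfl) (fun _ _ _ => rfl)

lemma monDeg_single (v : σ) (k : ℕ) : monDeg (Finsupp.single v k) = k :=
  Finsupp.sum_single_index rfl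

lemma suppAddSingle [DecidableEq σ] {c : σ →₀ ℕ} {j : σ} {k : ℕ} (hk : k ≠ 0) :
    (c + Finsupp.single j k).support = insert j c.support := by
  classical
  ext x
  by_cases h : x = j <;>
    simp [Finsupp.mem_support_iff, Finsupp.add_apply, Finsupp.single_apply, h, hk,
      eq_comm (a := j)]

lemma totalDegree_def (p : MvPolynomial σ R) :
    p.totalDegree = p.support.sup monDeg := rfl

lemma exists_top_monomial {p : MvPolynomial σ R} (hp : p ≠ 0) :
    ∃ μ ∈ p.support, p.totalDegree = monDeg μ := by
  obtain ⟨μ, hμ, he⟩ :=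
    Finset.exists_mem_eq_sup p.support (support_nonempty.2 hp) monDeg
  exact ⟨μ, hμ, by rw [totalDegree_def, he]⟩

lemma totalDegree_sub_X_mul {p : MvPolynomial σ R} (hp : p ≠ 0) (v : σ) :
    p.totalDegree + 1 ≤ (p - X v * p).totalDegree := by
  obtain ⟨μ, hμ, hdeg⟩ := exists_top_monomial hp
  have h1 : coeff (μ + Finsupp.single v 1) p = 0 := by
    by_contra h
    have := monDeg_le_totalDegree (MvPolynomial.mem_support_iff.2 h)
    rw [monDeg_add, monDeg_single, hdeg] at this
    omega
  have h2 : coeff (μ + Finsupp.single v 1) (X v * p) = coeff μ p := by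
    rw [add_comm μ (Finsupp.single v 1), coeff_X_mul]
  have hcoeff : coeff (μ + Finsupp.single v 1) (p - X v * p) ≠ 0 := by
    rw [coeff_sub, h1, h2, zero_sub, neg_ne_zero]
    exact MvPolynomial.mem_support_iff.1 hμ
  have := monDeg_le_totalDegree (MvPolynomial.mem_support_iff.2 hcoeff)
  rw [monDeg_add, monDeg_single, ← hdeg] at this
  omega

lemma totalDegree_X_mul_ge {p : MvPolynomial σ R} (hp : p ≠ 0) (v : σ) :
    p.totalDegree + 1 ≤ (X v * p).totalDegree := by
  obtain ⟨μ, hμ, hdeg⟩ := exists_top_monomial hp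
  have hmem : Finsupp.single v 1 + μ ∈ (X v * p).support := by
    rw [support_X_mul]
    exact Finset.mem_map.2 ⟨μ, hμ, rfl⟩
  have := monDeg_le_totalDegree hmem
  rw [monDeg_add, monDeg_single, ← hdeg] at this
  omega

lemma X_mul_ne_zero {p : MvPolynomial σ R} (hp : p ≠ 0) (v : σ) : X v * p ≠ 0 := by
  rw [← support_nonempty] at hp ⊢
  rw [support_X_mul]
  exact hp.map

lemma support_monomial_one_mul (D : σ →₀ ℕ) (p : MvPolynomial σ R) {μ : σ →₀ ℕ}
    (hμ : μ ∈ ((monomial D (1 : R)) * p).support) : ∃ b ∈ p.support, μ = D + b := by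
  classical
  have h := MvPolynomial.support_mul _ _ hμ
  rw [Finset.mem_add] at h
  obtain ⟨a, ha, b, hb, rfl⟩ := h
  have : a = D := Finset.mem_singleton.1 (support_monomial_subset ha)
  subst this
  exact ⟨b, hb, rfl⟩

lemma card_support_monomial_one_mul (D : σ →₀ ℕ) (p : MvPolynomial σ R) :
    ((monomial D (1 : R)) * p).support.card ≤ p.support.card := by
  classical
  have hsub : ((monomial D (1 : R)) * p).support ⊆ p.support.image (D + ·) := by
    intro μ hμ
    obtain ⟨b, hb, rfl⟩ := support_monomial_one_mul D p hμ
    exact Finset.mem_image.2 ⟨b, hb, rfl⟩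
  exact le_trans (Finset.card_le_card hsub) Finset.card_image_le

lemma prod_X_eq_monomial (t : Finset σ) :
    (∏ u ∈ t, (X u : MvPolynomial σ R)) =
      monomial (∑ u ∈ t, Finsupp.single u 1) (1 : R) := by
  classical
  induction t using Finset.induction_on with
  | empty => simp [monomial_zero']
  | insert _ _ hnotmem ih =>
    rename_i a s
    rw [Finset.prod_insert hnotmem, Finset.sum_insert hnotmem, ih]
    rw [X, monomial_mul, one_mul]

open Classical in
lemma sum_ite_subset (A : Set (σ →₀ ℕ)) (u : MvPolynomial σ R) (S : Finset (σ →₀ ℕ))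
    (hS : u.support ⊆ S) :
    (∑ μ ∈ u.support, if μ ∈ A then coeff μ u else 0)
      = ∑ μ ∈ S, if μ ∈ A then coeff μ u else 0 := by
  refine Finset.sum_subset hS fun x _ hnx => ?_
  rw [MvPolynomial.notMem_support_iff.1 hnx]
  simp

open Classical in
/-- Sum of the coefficients of a polynomial over a set of monomials, as an additive map. -/
noncomputable def coefSum (A : Set (σ →₀ ℕ)) : MvPolynomial σ R →+ R where
  toFun p := ∑ μ ∈ p.support, if μ ∈ A then coeff μ p else 0
  map_zero' := by simp
  map_add' p q := by
    rw [sum_ite_subset A (p + q) (p.support ∪ q.support) MvPolynomial.support_add,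
      sum_ite_subset A p (p.support ∪ q.support) Finset.subset_union_left,
      sum_ite_subset A q (p.support ∪ q.support) Finset.subset_union_right,
      ← Finset.sum_add_distrib]
    refine Finset.sum_congr rfl fun μ _ => ?_
    rw [coeff_add]
    split_ifs <;> simp

open Classical in
lemma coefSum_apply (A : Set (σ →₀ ℕ)) (p : MvPolynomial σ R) :
    coefSum A p = ∑ μ ∈ p.support, if μ ∈ A then coeff μ p else 0 := rfl

open Classical in
lemma coefSum_monomial (A : Set (σ →₀ ℕ)) (d : σ →₀ ℕ) (c : R) :
    coefSum A (monomial d c) = if d ∈ A then c else 0 := by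
  rw [coefSum_apply]
  rcases eq_or_ne c 0 with rfl | hc
  · simp
  · rw [support_monomial, if_neg hc, Finset.sum_singleton, coeff_monomial, if_pos rfl]

open Classical in
lemma coefSum_X_mul (A : Set (σ →₀ ℕ)) (v : σ) (p : MvPolynomial σ R) :
    coefSum A (X v * p)
      = ∑ μ ∈ p.support, if Finsupp.single v 1 + μ ∈ A then coeff μ p else 0 := by
  conv_lhs => rw [p.as_sum, Finset.mul_sum, map_sum (coefSum A)]
  refine Finset.sum_congr rfl fun μ hμ => ?_
  rw [show (X v : MvPolynomial σ R) * monomial μ (coeff μ p)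
      = monomial (Finsupp.single v 1 + μ) (coeff μ p) from by rw [X, monomial_mul, one_mul],
    coefSum_monomial]

end PebAux3
namespace PebMain

open MvPolynomial Finsupp PebAux PebAux2 PebAux3

variable (G : FinDigraph) (F : Type) [Field F]
variable (r : Option G.V → MvPolynomial G.V F) (s' : G.V → MvPolynomial G.V F)

/-- The predecessors of `v` as a `Finset`. -/
noncomputable def predF (v : G.V) : Finset G.V := (G.pred v).toFinite.toFinset

/-- The product of the predecessor variables, as a monomial exponent. -/
noncomputable def DD (v : G.V) : G.V →₀ ℕ := ∑ u ∈ predF G v, Finsupp.single u 1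

/-- `Q v = (∏_{u ∈ pred v} x_u) * r v`. -/
noncomputable def QQ (v : G.V) : MvPolynomial G.V F := (monomial (DD G v)) 1 * r (some v)

lemma prod_predF (v : G.V) :
    (∏ u ∈ predF G v, (X u : MvPolynomial G.V F)) = monomial (DD G v) 1 :=
  prod_X_eq_monomial _

lemma pebAxiom_eq (v : G.V) :
    G.pebAxiom F v = (1 - X v) * monomial (DD G v) 1 := by
  rw [FinDigraph.pebAxiom, ← prod_predF]
  rfl

lemma r_mul_pebAxiom (v : G.V) :
    r (some v) * G.pebAxiom F v = QQ G F r v - X v * QQ G F r v := by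
  rw [pebAxiom_eq, QQ]
  ring

lemma DD_apply_mem {v u : G.V} (hu : u ∈ predF G v) : DD G v u = 1 := by
  classical
  rw [DD, Finsupp.finset_sum_apply]
  rw [Finset.sum_eq_single u]
  · simp
  · intro b _ hb; simp [Finsupp.single_apply, hb]
  · intro h; exact absurd hu h

lemma mem_support_of_mem_QQ {v : G.V} {μ : G.V →₀ ℕ} (hμ : μ ∈ (QQ G F r v).support)
    {u : G.V} (hu : u ∈ predF G v) : u ∈ μ.support := by
  obtain ⟨b, _, rfl⟩ := support_monomial_one_mul (DD G v) (r (some v)) hμ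
  rw [Finsupp.mem_support_iff, Finsupp.add_apply, DD_apply_mem G hu]
  omega

/-- The edge relation between monomials extracted from the certificate. -/
def Adj (μ ν : G.V →₀ ℕ) : Prop :=
  (∃ v, μ ∈ (QQ G F r v).support ∧ ν = μ + Finsupp.single v 1) ∨
  (∃ j, ∃ c ∈ (s' j).support, μ = c + Finsupp.single j 1 ∧ ν = c + Finsupp.single j 2)

/-- The symmetrized edge relation. -/
def Adj' (μ ν : G.V →₀ ℕ) : Prop := Adj G F r s' μ ν ∨ Adj G F r s' ν μ

/-- Monomials reachable from the constant monomial. -/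
def AA : Set (G.V →₀ ℕ) := {μ | Relation.ReflTransGen (Adj' G F r s') 0 μ}

lemma AA_iff {μ ν : G.V →₀ ℕ} (h : Adj G F r s' μ ν) :
    μ ∈ AA G F r s' ↔ ν ∈ AA G F r s' :=
  ⟨fun hμ => hμ.tail (Or.inl h), fun hν => hν.tail (Or.inr h)⟩

end PebMain
namespace PebMain

open MvPolynomial Finsupp PebAux PebAux2 PebAux3

variable (G : FinDigraph) (F : Type) [Field F] (z : G.V)
variable (r : Option G.V → MvPolynomial G.V F) (s' : G.V → MvPolynomial G.V F)

open Classical in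
lemma exists_reachable (hcert : IsNSCert (G.pebContradiction F z) r s') :
    ∃ μ, μ ∈ AA G F r s' ∧ μ ∈ (r none * X z).support := by
  by_contra hcon
  push_neg at hcon
  set A := AA G F r s' with hA
  set L := coefSum (R := F) A with hLdef
  have hL1 : L 1 = 1 := by
    rw [hLdef, show (1 : MvPolynomial G.V F) = monomial 0 1 by
        rw [monomial_zero']; simp, coefSum_monomial, if_pos]
    exact Relation.ReflTransGen.refl
  have happly := congrArg L hcert
  rw [hL1, map_add, map_sum, map_sum] at happly
  have hnone : L (r none * G.pebContradiction F z none) = 0 := by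
    have : G.pebContradiction F z none = X z := rfl
    rw [this, hLdef, coefSum_apply]
    refine Finset.sum_eq_zero fun μ hμ => ?_
    rw [if_neg]
    intro hμA
    exact hcon μ hμA hμ
  have hsome : ∀ v, L (r (some v) * G.pebContradiction F z (some v)) = 0 := by
    intro v
    have hpc : G.pebContradiction F z (some v) = G.pebAxiom F v := rfl
    rw [hpc, r_mul_pebAxiom, map_sub, hLdef, coefSum_apply, coefSum_X_mul,
      ← Finset.sum_sub_distrib]
    refine Finset.sum_eq_zero fun μ hμ => ?_
    have hiff : μ ∈ A ↔ Finsupp.single v 1 + μ ∈ A := by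
      rw [add_comm]
      exact AA_iff G F r s' (Or.inl ⟨v, hμ, rfl⟩)
    rw [if_congr hiff rfl rfl, sub_self]
  have hsj : ∀ j, L (s' j * (X j ^ 2 - X j)) = 0 := by
    intro j
    have hexp : s' j * (X j ^ 2 - X j) = X j * (X j * s' j) - X j * s' j := by ring
    rw [hexp, map_sub, hLdef, coefSum_X_mul, coefSum_X_mul]
    rw [support_X_mul, Finset.sum_map]
    rw [← Finset.sum_sub_distrib]
    refine Finset.sum_eq_zero fun c hc => ?_
    have he1 : Finsupp.single j 1 + addLeftEmbedding (Finsupp.single j 1) c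
        = c + Finsupp.single j 2 := by
      rw [addLeftEmbedding_apply, ← add_assoc, ← Finsupp.single_add, add_comm]
    have he2 : (coeff (addLeftEmbedding (Finsupp.single j 1) c) (X j * s' j) : F)
        = coeff c (s' j) := by
      rw [addLeftEmbedding_apply, coeff_X_mul]
    have hiff : (c + Finsupp.single j 2 ∈ A) ↔ (Finsupp.single j 1 + c ∈ A) := by
      rw [add_comm (Finsupp.single j 1) c]
      exact (AA_iff G F r s' (Or.inr ⟨j, c, hc, rfl, rfl⟩)).symm
    rw [he1, he2, if_congr hiff rfl rfl, sub_self]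
  rw [Finset.sum_congr rfl fun j _ => hsj j, Finset.sum_const_zero] at happly
  rw [Fintype.sum_option (fun i => L (r i * G.pebContradiction F z i))] at happly
  rw [hnone, Finset.sum_congr rfl fun v _ => hsome v, Finset.sum_const_zero] at happly
  simp at happly

lemma r_none_ne_zero (hcert : IsNSCert (G.pebContradiction F z) r s') : r none ≠ 0 := by
  intro h0
  have := congrArg (eval fun _ : G.V => (1 : F)) hcert
  rw [map_add, map_sum, map_sum, map_one] at this
  have hz1 : ∀ j, eval (fun _ : G.V => (1 : F)) (s' j * (X j ^ 2 - X j)) = 0 := by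
    intro j; simp
  have hax : ∀ v, eval (fun _ : G.V => (1 : F)) (r (some v) * G.pebContradiction F z (some v))
      = 0 := by
    intro v
    have hpc : G.pebContradiction F z (some v) = G.pebAxiom F v := rfl
    rw [hpc, FinDigraph.pebAxiom]
    simp
  rw [Finset.sum_congr rfl fun j _ => hz1 j, Finset.sum_const_zero,
    Fintype.sum_option (fun i => eval (fun _ : G.V => (1:F)) (r i * G.pebContradiction F z i)),
    Finset.sum_congr rfl fun v _ => hax v, Finset.sum_const_zero] at this
  have hnonepc : G.pebContradiction F z none = X z := rfl
  rw [hnonepc, h0] at this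
  simp at this

end PebMain
namespace PebMain

open MvPolynomial Finsupp PebAux PebAux2 PebAux3

variable (G : FinDigraph) (F : Type) [Field F] (z : G.V)
variable (r : Option G.V → MvPolynomial G.V F) (s' : G.V → MvPolynomial G.V F)

variable {s : ℕ}

lemma deg_term_le (hdeg : nsDegree (G.pebContradiction F z) r s' ≤ s) (i : Option G.V) :
    (r i * G.pebContradiction F z i).totalDegree ≤ s := by
  rw [nsDegree, max_le_iff] at hdeg
  exact le_trans (Finset.le_sup (f := fun i => (r i * G.pebContradiction F z i).totalDegree) (Finset.mem_univ i)) hdeg.1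

lemma deg_sterm_le (hdeg : nsDegree (G.pebContradiction F z) r s' ≤ s) (j : G.V) :
    (s' j * (X j ^ 2 - X j)).totalDegree ≤ s := by
  rw [nsDegree, max_le_iff] at hdeg
  exact le_trans (Finset.le_sup (f := fun j => (s' j * (X j ^ 2 - X j)).totalDegree) (Finset.mem_univ j)) hdeg.2

lemma adj_card_bound (hdeg : nsDegree (G.pebContradiction F z) r s' ≤ s)
    {x y : G.V →₀ ℕ} (h : Adj G F r s' x y) :
    x.support.card ≤ s ∧ y.support.card ≤ s := by
  classical
  rcases h with ⟨v, hx, rfl⟩ | ⟨j, c, hc, rfl, rfl⟩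
  · -- v-edge
    have hQ : QQ G F r v ≠ 0 := by
      intro h0; rw [h0] at hx; simp at hx
    have hbump := totalDegree_sub_X_mul hQ v
    have hle : (QQ G F r v - X v * QQ G F r v).totalDegree ≤ s := by
      rw [← r_mul_pebAxiom]
      have hpc : G.pebContradiction F z (some v) = G.pebAxiom F v := rfl
      rw [← hpc]
      exact deg_term_le G F z r s' hdeg (some v)
    have hxd : monDeg x ≤ (QQ G F r v).totalDegree := monDeg_le_totalDegree hx
    have hxc := card_support_le_monDeg x
    constructor
    · omega
    · have : (x + Finsupp.single v 1).support = insert v x.support :=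
        suppAddSingle one_ne_zero
      rw [this]
      have := Finset.card_insert_le v x.support
      omega
  · -- s-edge
    have hs : s' j ≠ 0 := by
      intro h0; rw [h0] at hc; simp at hc
    have hXs : X j * s' j ≠ 0 := X_mul_ne_zero hs j
    have hbump := totalDegree_sub_X_mul hXs j
    have h1 := totalDegree_X_mul_ge hs j
    have hneg : (X j * s' j - X j * (X j * s' j)) = -(s' j * (X j ^ 2 - X j)) := by ring
    have hle : (X j * s' j - X j * (X j * s' j)).totalDegree ≤ s := by
      rw [hneg, totalDegree_neg]
      exact deg_sterm_le G F z r s' hdeg j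
    have hcd : monDeg c ≤ (s' j).totalDegree := monDeg_le_totalDegree hc
    have hcc := card_support_le_monDeg c
    have e1 : (c + Finsupp.single j 1).support = insert j c.support :=
      suppAddSingle one_ne_zero
    have e2 : (c + Finsupp.single j 2).support = insert j c.support :=
      suppAddSingle (by norm_num)
    rw [e1, e2]
    have := Finset.card_insert_le j c.support
    constructor <;> omega

lemma pebAxiom_card_ge (v : G.V) : 2 ≤ (G.pebAxiom F v).support.card := by
  classical
  have hx : G.pebAxiom F v
      = monomial (DD G v) 1 - monomial (Finsupp.single v 1 + DD G v) 1 := by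
    rw [pebAxiom_eq, sub_mul, one_mul, X, monomial_mul, one_mul]
  have hne : DD G v ≠ Finsupp.single v 1 + DD G v := by
    intro h
    have := congrArg (fun f => f v) h
    simp [Finsupp.add_apply, Finsupp.single_apply] at this
  have hmem1 : DD G v ∈ (G.pebAxiom F v).support := by
    rw [hx, MvPolynomial.mem_support_iff, coeff_sub, coeff_monomial, coeff_monomial,
      if_pos rfl, if_neg (fun h => hne h.symm)]
    simp
  have hmem2 : Finsupp.single v 1 + DD G v ∈ (G.pebAxiom F v).support := by
    rw [hx, MvPolynomial.mem_support_iff, coeff_sub, coeff_monomial, coeff_monomial,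
      if_pos rfl, if_neg hne]
    simp
  have hsub : ({DD G v, Finsupp.single v 1 + DD G v} : Finset (G.V →₀ ℕ))
      ⊆ (G.pebAxiom F v).support := by
    intro x hx'
    rcases Finset.mem_insert.1 hx' with rfl | hx'
    · exact hmem1
    · rw [Finset.mem_singleton.1 hx']; exact hmem2
  calc 2 = ({DD G v, Finsupp.single v 1 + DD G v} : Finset (G.V →₀ ℕ)).card :=
        (Finset.card_pair hne).symm
    _ ≤ _ := Finset.card_le_card hsub

end PebMain
namespace PebMain

open MvPolynomial Finsupp PebAux PebAux2 PebAux3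

variable (G : FinDigraph) (F : Type) [Field F] (z : G.V)
variable (r : Option G.V → MvPolynomial G.V F) (s' : G.V → MvPolynomial G.V F)

lemma revMove_symm (hacy : G.Acyclic) {P Q : Set G.V} (h : G.RevMove P Q) :
    G.RevMove Q P := by
  obtain ⟨v, hpred, hca⟩ := h
  have hvv : v ∉ G.pred v := fun hv => hacy v (Relation.TransGen.single hv)
  rcases hca with ⟨hvP, rfl⟩ | ⟨hvP, rfl⟩
  · refine ⟨v, hpred.trans (Set.subset_insert _ _),
      Or.inr ⟨Set.mem_insert _ _, ?_⟩⟩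
    exact (Set.insert_diff_self_of_notMem hvP).symm
  · refine ⟨v, ?_, Or.inl ⟨fun hv => hv.2 rfl, ?_⟩⟩
    · intro u hu
      exact ⟨hpred hu, fun he => hvv ((Set.mem_singleton_iff.1 he) ▸ hu)⟩
    · rw [Set.insert_diff_singleton, Set.insert_eq_self.2 hvP]

lemma pred_subset_of_QQ {v : G.V} {μ : G.V →₀ ℕ} (hμ : μ ∈ (QQ G F r v).support) :
    G.pred v ⊆ ↑μ.support := by
  intro u hu
  have hu' : u ∈ predF G v := (G.pred v).toFinite.mem_toFinset.2 hu
  exact mem_support_of_mem_QQ G F r hμ hu'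

lemma adj_move {x y : G.V →₀ ℕ} (h : Adj G F r s' x y) :
    (x.support = y.support) ∨
      (G.RevMove ↑x.support ↑y.support ∧ G.RevMove ↑y.support ↑x.support) := by
  classical
  rcases h with ⟨v, hx, rfl⟩ | ⟨j, c, _, rfl, rfl⟩
  · have hsupp : (x + Finsupp.single v 1).support = insert v x.support :=
      suppAddSingle one_ne_zero
    by_cases hv : v ∈ x.support
    · left; rw [hsupp, Finset.insert_eq_self.2 hv]
    · right
      have hpred := pred_subset_of_QQ G F r hx
      have hco : ((x + Finsupp.single v 1).support : Set G.V) = insert v ↑x.support := by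
        rw [hsupp]; simp
      constructor
      · exact ⟨v, hpred, Or.inl ⟨fun hc => hv (Finset.mem_coe.1 hc), hco⟩⟩
      · refine ⟨v, ?_, Or.inr ⟨?_, ?_⟩⟩
        · rw [hco]; exact hpred.trans (Set.subset_insert _ _)
        · rw [hco]; exact Set.mem_insert _ _
        · rw [hco]
          exact (Set.insert_diff_self_of_notMem
            (fun hc => hv (Finset.mem_coe.1 hc))).symm
  · left
    rw [suppAddSingle one_ne_zero, suppAddSingle (two_ne_zero)]

open Classical in
/-- The set of edges extracted from the certificate, with multiplicities as indexed pairs. -/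
noncomputable def EdgeSet : Finset (G.V × (G.V →₀ ℕ)) :=
  Finset.univ.biUnion fun v => (QQ G F r v).support.image fun θ => (v, θ)

/-- Endpoints of an edge. -/
noncomputable def ept (e : G.V × (G.V →₀ ℕ)) : (G.V →₀ ℕ) × (G.V →₀ ℕ) :=
  (e.2, e.2 + Finsupp.single e.1 1)

lemma edgeSet_card : (EdgeSet G F r).card ≤ ∑ v, (r (some v)).support.card := by
  classical
  refine le_trans Finset.card_biUnion_le (Finset.sum_le_sum fun v _ => ?_)
  exact le_trans Finset.card_image_le (card_support_monomial_one_mul _ _)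

lemma adj'_to_edge {x y : G.V →₀ ℕ} (h : Adj' G F r s' x y) :
    Finsupp.support x = Finsupp.support y ∨
      ∃ e ∈ EdgeSet G F r, ept G e = (x, y) ∨ ept G e = (y, x) := by
  classical
  have hmem : ∀ v (θ : G.V →₀ ℕ), θ ∈ (QQ G F r v).support → (v, θ) ∈ EdgeSet G F r := by
    intro v θ hθ
    exact Finset.mem_biUnion.2 ⟨v, Finset.mem_univ v, Finset.mem_image.2 ⟨θ, hθ, rfl⟩⟩
  rcases h with (⟨v, hx, rfl⟩ | ⟨j, c, _, rfl, rfl⟩) | (⟨v, hy, rfl⟩ | ⟨j, c, _, rfl, rfl⟩)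
  · exact Or.inr ⟨(v, x), hmem v x hx, Or.inl rfl⟩
  · left; rw [suppAddSingle one_ne_zero, suppAddSingle (two_ne_zero)]
  · exact Or.inr ⟨(v, y), hmem v y hy, Or.inr rfl⟩
  · left; rw [suppAddSingle one_ne_zero, suppAddSingle (two_ne_zero)]

end PebMain
/-- If the pebbling contradiction of a finite DAG `G` with unique sink `z` has
a Nullstellensatz refutation over a field `F` of size at most `t + 1` and degree at most `s`,
then `G` has a reversible pebbling with time at most `t` and space at most `s`. -/
theorem nullstellensatz_to_pebbling (G : FinDigraph) (hacy : G.Acyclic) (z : G.V)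
    (hz : G.UniqueSink z) (F : Type) [Field F] (t s : ℕ)
    (href : ∃ (r : Option G.V → MvPolynomial G.V F) (s' : G.V → MvPolynomial G.V F),
      IsNSCert (G.pebContradiction F z) r s' ∧
      nsSize (G.pebContradiction F z) r s' ≤ t + 1 ∧
      nsDegree (G.pebContradiction F z) r s' ≤ s) :
    ∃ t' ≤ t, ∃ P : ℕ → Set G.V, G.IsRevPebbling z t' P ∧ G.space t' P ≤ s := by
  classical
  obtain ⟨r, s', hcert, hsize, hdeg⟩ := href
  open PebAux PebAux2 PebAux3 PebMain Finsupp MvPolynomial in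
  -- the reachable monomial containing the sink
  obtain ⟨μz, hμzA, hμzsupp⟩ := PebMain.exists_reachable G F z r s' hcert
  have hzsupp : z ∈ μz.support := by
    have h := MvPolynomial.support_mul _ _ hμzsupp
    rw [Finset.mem_add] at h
    obtain ⟨a, _, b, hb, rfl⟩ := h
    rw [MvPolynomial.support_X, Finset.mem_singleton] at hb
    subst hb
    rw [Finsupp.mem_support_iff, Finsupp.add_apply]
    simp
  -- a duplicate-free chain of monomials from 0 to μz
  obtain ⟨l, hchain, hlast, hnodup⟩ := PebAux.rtg_nodup_chain hμzA
  -- configurations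
  set cs : List (Finset G.V) := l.map Finsupp.support with hcs
  set K : List (Finset G.V) := PebAux.compress ∅ cs with hKdef
  set k := K.length with hk
  -- chain of reversible moves
  have hadjmove : ∀ x y : G.V →₀ ℕ, PebMain.Adj' G F r s' x y →
      x.support = y.support ∨ G.RevMove ↑x.support ↑y.support := by
    intro x y h
    rcases h with h | h
    · rcases PebMain.adj_move G F r s' h with he | hm
      · exact Or.inl he
      · exact Or.inr hm.1
    · rcases PebMain.adj_move G F r s' h with he | hm
      · exact Or.inl he.symm
      · exact Or.inr hm.2
  have hmove : List.Chain (fun S T : Finset G.V => G.RevMove ↑S ↑T) ∅ K := by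
    rw [hKdef]
    apply PebAux.compress_chain
    have h0 : (∅ : Finset G.V) = Finsupp.support (0 : G.V →₀ ℕ) := by simp
    rw [hcs, h0]
    rw [List.Chain, ← List.map_cons, List.isChain_map Finsupp.support]
    exact List.IsChain.imp (fun a b hab => hadjmove a b hab) hchain
  -- last configuration
  have hlastK : (∅ :: K).getLast? = some μz.support := by
    have h0 : (∅ : Finset G.V) = Finsupp.support (0 : G.V →₀ ℕ) := by simp
    rw [hKdef, h0, PebAux.compress_getLast?, hcs]
    have : (Finsupp.support (0 : G.V →₀ ℕ) :: l.map Finsupp.support)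
        = (0 :: l).map Finsupp.support := by simp
    rw [this, PebAux2.getLast?_map, hlast]
    rfl
  -- counting: k is at most the number of edges
  have hcount : k ≤ (PebMain.EdgeSet G F r).card := by
    have hch2 : List.Chain (fun x y : G.V →₀ ℕ =>
        Finsupp.support x = Finsupp.support y ∨
          ∃ e ∈ PebMain.EdgeSet G F r,
            PebMain.ept G e = (x, y) ∨ PebMain.ept G e = (y, x)) 0 l :=
      List.IsChain.imp (fun a b hab => PebMain.adj'_to_edge G F r s' hab) hchain
    have h := PebAux.count_lemma Finsupp.support (PebMain.ept G) l 0
      (PebMain.EdgeSet G F r) hch2 hnodup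
    have h0 : Finsupp.support (0 : G.V →₀ ℕ) = (∅ : Finset G.V) := by simp
    rw [h0] at h
    exact h
  -- size accounting
  have hkt : 2 * k ≤ t := by
    have h1 : 1 ≤ (r none).support.card :=
      Finset.card_pos.2 (MvPolynomial.support_nonempty.2
        (PebMain.r_none_ne_zero G F z r s' hcert))
    have hXz : 1 ≤ (G.pebContradiction F z none).support.card := by
      have : G.pebContradiction F z none = X z := rfl
      rw [this, MvPolynomial.support_X, Finset.card_singleton]
    have h2 : ∀ v : G.V, 2 ≤ (G.pebContradiction F z (some v)).support.card := by
      intro v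
      have : G.pebContradiction F z (some v) = G.pebAxiom F v := rfl
      rw [this]
      exact PebMain.pebAxiom_card_ge G F v
    have h3 := PebMain.edgeSet_card G F r
    rw [nsSize, Fintype.sum_option
      (fun i => (r i).support.card * (G.pebContradiction F z i).support.card)] at hsize
    have h4 : ∑ v : G.V, (r (some v)).support.card * 2
        ≤ ∑ v : G.V, (r (some v)).support.card
            * (G.pebContradiction F z (some v)).support.card :=
      Finset.sum_le_sum fun v _ => Nat.mul_le_mul_left _ (h2 v)
    have h5 : 1 ≤ (r none).support.card * (G.pebContradiction F z none).support.card :=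
      Nat.one_le_iff_ne_zero.2 (by positivity)
    have h6 : ∑ v : G.V, (r (some v)).support.card * 2
        = (∑ v : G.V, (r (some v)).support.card) * 2 := by
      rw [Finset.sum_mul]
    omega
  -- the pebbling
  set L' : List (Finset G.V) := ∅ :: K with hL'
  have hlen : L'.length = k + 1 := by simp [hL', hk]
  set P : ℕ → Set G.V := fun i => ↑(L'.getD (if i ≤ k then i else 2 * k - i) ∅) with hP
  have hPdef : ∀ i, P i = ↑(L'.getD (if i ≤ k then i else 2 * k - i) ∅) :=
    fun _ => rfl
  have hPk : P k = ↑μz.support := by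
    rw [hPdef, if_pos (le_refl k)]
    have := PebAux2.getD_last (l := L') (∅ : Finset G.V) hlastK
    rw [hlen] at this
    simp only [Nat.add_sub_cancel] at this
    rw [this]
  have hstep : ∀ j < k, G.RevMove ↑(L'.getD j ∅) ↑(L'.getD (j + 1) ∅) := by
    intro j hj
    exact PebAux2.chain_getD ∅ hmove j (by omega)
  refine ⟨2 * k, hkt, P, ⟨?_, ?_, ⟨k, by omega, ?_⟩, ?_⟩, ?_⟩
  · -- P 0 = ∅
    rw [hPdef]
    simp [hL']
  · -- P (2 * k) = ∅
    rw [hPdef]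
    by_cases hk0 : k = 0
    · have h2k : 2 * k = 0 := by omega
      rw [h2k]
      simp [hL']
    · rw [if_neg (by omega), Nat.sub_self]
      simp [hL']
  · -- z is pebbled at time k
    rw [hPk]
    exact hzsupp
  · -- all moves are legal
    intro i hi
    rcases lt_or_ge i k with hik | hik
    · rw [hPdef, hPdef]
      rw [if_pos (by omega), if_pos (by omega)]
      exact hstep i hik
    · have e1 : (if i ≤ k then i else 2 * k - i) = 2 * k - i := by
        split_ifs with h
        · omega
        · rfl
      have e2 : ¬(i + 1 ≤ k) := by omega
      rw [hPdef, hPdef]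
      rw [e1, if_neg e2]
      have hj : 2 * k - (i + 1) < k := by omega
      have e3 : 2 * k - i = (2 * k - (i + 1)) + 1 := by omega
      rw [e3]
      exact PebMain.revMove_symm G hacy (hstep _ hj)
  · -- space bound
    rw [FinDigraph.space]
    refine Finset.sup_le fun i _ => ?_
    rw [hPdef]
    set j := if i ≤ k then i else 2 * k - i with hj
    have hjk : j ≤ k := by
      rw [hj]; split_ifs with h
      · exact h
      · omega
    have hmem : L'.getD j ∅ ∈ L' := PebAux2.getD_mem ∅ (by omega)
    rw [Set.ncard_coe_finset]
    rw [hL'] at hmem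
    rcases List.mem_cons.1 hmem with he | hmem
    · rw [he]
      simp
    · have hmem2 := PebAux.compress_subset _ _ _ hmem
      rw [hcs] at hmem2
      obtain ⟨μ, hμl, hμe⟩ := List.mem_map.1 hmem2
      obtain ⟨y, hy⟩ := PebAux.chain_exists_pred hchain μ hμl
      rw [← hμe]
      rcases hy with hy | hy
      · exact (PebMain.adj_card_bound G F z r s' hdeg hy).2
      · exact (PebMain.adj_card_bound G F z r s' hdeg hy).1
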